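/- For self-adjoint operators A, B on a complex inner product space, a unit vector ψ, and any unit vector ψ⊥ orthogonal to ψ: ΔA² + ΔB² ≥ ±i⟨ψ, [A,B]ψ⟩ + |⟨ψ, (A ± iB)ψ⊥⟩|², where the sign is chosen so that ±i⟨ψ,[A,B]ψ⟩ ≥ 0. -/

import Mathlib

open Complex

local notation "⟪" x ", " y "⟫" => @inner ℂ _ _ x y

/-- Maccone–Pati sum uncertainty relation:
ΔA² + ΔB² ≥ ±i⟨ψ,[A,B]ψ⟩ + |⟨ψ,(A ± iB)ψ⊥⟩|², sign chosen so ±i⟨ψ,[A,B]ψ⟩ ≥ 0. -/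
theorem maccone_pati_sum
    {E : Type*} [NormedAddCommGroup E] [InnerProductSpace ℂ E]
    (A B : E →ₗ[ℂ] E)
    (hA : ∀ x y : E, ⟪A x, y⟫ = ⟪x, A y⟫)
    (hB : ∀ x y : E, ⟪B x, y⟫ = ⟪x, B y⟫)
    (ψ ψp : E) (hψ : ‖ψ‖ = 1) (hψp : ‖ψp‖ = 1) (horth : ⟪ψ, ψp⟫ = 0)
    (s : ℝ) (hs : s = 1 ∨ s = -1)
    (hsign : 0 ≤ s * (Complex.I * ⟪ψ, A (B ψ) - B (A ψ)⟫).re) :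
    ((⟪ψ, A (A ψ)⟫).re - ((⟪ψ, A ψ⟫).re) ^ 2) +
        ((⟪ψ, B (B ψ)⟫).re - ((⟪ψ, B ψ⟫).re) ^ 2) ≥
      s * (Complex.I * ⟪ψ, A (B ψ) - B (A ψ)⟫).re +
        ‖⟪ψ, A ψp + ((s : ℂ) * Complex.I) • B ψp⟫‖ ^ 2 := by
  set α : ℝ := (⟪ψ, A ψ⟫).re with hα
  set β : ℝ := (⟪ψ, B ψ⟫).re with hβ
  have hψψ : ⟪ψ, ψ⟫ = 1 := by
    rw [inner_self_eq_norm_sq_to_K, hψ]; norm_num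
  have hAreal : ⟪ψ, A ψ⟫ = (α : ℂ) := by
    have h1 : (starRingEnd ℂ) ⟪ψ, A ψ⟫ = ⟪ψ, A ψ⟫ := by
      rw [inner_conj_symm]; exact hA ψ ψ
    exact (Complex.conj_eq_iff_re.mp h1).symm
  have hBreal : ⟪ψ, B ψ⟫ = (β : ℂ) := by
    have h1 : (starRingEnd ℂ) ⟪ψ, B ψ⟫ = ⟪ψ, B ψ⟫ := by
      rw [inner_conj_symm]; exact hB ψ ψ
    exact (Complex.conj_eq_iff_re.mp h1).symm
  have hAψψ : ⟪A ψ, ψ⟫ = (α : ℂ) := by rw [hA, hAreal]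
  have hBψψ : ⟪B ψ, ψ⟫ = (β : ℂ) := by rw [hB, hBreal]
  have hAB : ⟪A ψ, B ψ⟫ = ⟪ψ, A (B ψ)⟫ := hA ψ (B ψ)
  have hBA : ⟪B ψ, A ψ⟫ = ⟪ψ, B (A ψ)⟫ := hB ψ (A ψ)
  have hAA : ⟪A ψ, A ψ⟫ = ⟪ψ, A (A ψ)⟫ := hA ψ (A ψ)
  have hBB : ⟪B ψ, B ψ⟫ = ⟪ψ, B (B ψ)⟫ := hB ψ (B ψ)
  have hconj : ⟪ψ, B (A ψ)⟫ = (starRingEnd ℂ) ⟪ψ, A (B ψ)⟫ := by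
    rw [← hBA, ← hAB, inner_conj_symm]
  set u : ℂ := ⟪ψ, A (B ψ)⟫ with hu
  have hcomm : ⟪ψ, A (B ψ) - B (A ψ)⟫ = u - (starRingEnd ℂ) u := by
    rw [inner_sub_right, hconj]
  set φ : E := (A ψ - (α : ℂ) • ψ) - ((s : ℂ) * Complex.I) • (B ψ - (β : ℂ) • ψ) with hφ
  -- key identity
  have hkey : re ⟪φ, φ⟫ = ((⟪ψ, A (A ψ)⟫).re - α ^ 2) + ((⟪ψ, B (B ψ)⟫).re - β ^ 2)
      - s * (Complex.I * (u - (starRingEnd ℂ) u)).re := by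
    have hexp := hφ
    simp only [hφ, inner_sub_left, inner_sub_right, inner_smul_left, inner_smul_right,
      hψψ, hAreal, hBreal, hAψψ, hBψψ, hAB, hBA, hAA, hBB, ← hu, hconj]
    rcases hs with h | h <;> subst h <;>
      simp [Complex.add_re, Complex.sub_re, Complex.mul_re, Complex.mul_im,
        Complex.conj_re, Complex.conj_im, Complex.I_re, Complex.I_im,
        Complex.ofReal_re, Complex.ofReal_im, map_mul, Complex.conj_ofReal] <;>
      ring
  -- Cauchy–Schwarz
  have hsq : (‖⟪ψp, φ⟫‖) ^ 2 ≤ re ⟪φ, φ⟫ := by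
    have h1 : ‖⟪ψp, φ⟫‖ ≤ ‖ψp‖ * ‖φ‖ := norm_inner_le_norm ψp φ
    rw [hψp, one_mul] at h1
    have h2 : re ⟪φ, φ⟫ = ‖φ‖ ^ 2 := by
      rw [inner_self_eq_norm_sq_to_K]; norm_cast
    rw [h2]
    exact pow_le_pow_left₀ (norm_nonneg _) h1 2
  -- matching the inner product
  have hψpψ : ⟪ψp, ψ⟫ = 0 := by
    rw [← inner_conj_symm, horth, map_zero]
  have habs : ‖⟪ψ, A ψp + ((s : ℂ) * Complex.I) • B ψp⟫‖
      = ‖⟪ψp, φ⟫‖ := by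
    have h1 : ⟪ψ, A ψp + ((s : ℂ) * Complex.I) • B ψp⟫ = (starRingEnd ℂ) ⟪ψp, φ⟫ := by
      rw [hφ]
      simp only [inner_add_right, inner_sub_right, inner_smul_right, hψpψ,
        ← hA ψ ψp, ← hB ψ ψp, ← inner_conj_symm ψp (A ψ), ← inner_conj_symm ψp (B ψ)]
      simp [map_mul, Complex.conj_ofReal, map_sub]
    rw [h1, Complex.norm_conj]
  rw [hcomm, ge_iff_le, habs]
  have := hkey
  nlinarith [hsq]
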